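/- Let s ≥ 2 be an integer. If there exists an (s(s+1), s+2, 2s)-suitable core, then there exists an ((s+1)², s+2, 2s+1)-suitable core. -/

import Mathlib

/-- An `(N,v,t)`-suitable core: an `N × v` array, each of whose rows is a
permutation of `{1,…,v}` (modelled as `Fin v`, with `C i p` the symbol in
position `p` of row `i`), such that for every `s` with `0 ≤ s ≤ t-1`, every
symbol precedes every subset of `s` other symbols in at least `t - s` rows. -/
def IsSuitableCore (N v t : ℕ) (C : Fin N → Equiv.Perm (Fin v)) : Prop :=
  ∀ s : ℕ, s < t → ∀ σ : Fin v, ∀ S : Finset (Fin v), σ ∉ S → S.card = s →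
    t - s ≤ (Finset.univ.filter
      (fun i : Fin N => ∀ τ ∈ S, ((C i).symm σ : ℕ) < ((C i).symm τ : ℕ))).card

lemma fin_val_pos_aux {n : ℕ} {a : Fin (n + 2)} (h : a ≠ 0) : 0 < (a : ℕ) :=
  Nat.pos_of_ne_zero (fun hz => h (Fin.ext (by simp [hz])))

lemma fin_one_lt_aux {n : ℕ} {a : Fin (n + 2)} (h0 : a ≠ 0) (h1 : a ≠ 1) :
    1 < (a : ℕ) := by
  have hp := fin_val_pos_aux h0
  have hv1 : (a : ℕ) ≠ 1 := fun hz => h1 (Fin.ext (by simp [hz]))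
  omega

/-- For `s ≥ 2`, the existence of an `(s(s+1), s+2, 2s)`-suitable core implies
the existence of an `((s+1)², s+2, 2s+1)`-suitable core. -/
theorem exists_suitableCore_odd_of_even
    (s : ℕ) (hs : 2 ≤ s)
    (hC : ∃ C : Fin (s * (s + 1)) → Equiv.Perm (Fin (s + 2)),
      IsSuitableCore (s * (s + 1)) (s + 2) (2 * s) C) :
    ∃ D : Fin ((s + 1) ^ 2) → Equiv.Perm (Fin (s + 2)),
      IsSuitableCore ((s + 1) ^ 2) (s + 2) (2 * s + 1) D := by
  obtain ⟨C, hC⟩ := hC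
  -- Pigeonhole: some symbol is first in at least `s` rows of `C`.
  have hpig : ∃ σstar : Fin (s + 2),
      s ≤ (Finset.univ.filter
        (fun i : Fin (s * (s + 1)) => (C i).symm σstar = 0)).card := by
    by_contra hcon
    push_neg at hcon
    have hsum : (Finset.univ : Finset (Fin (s * (s + 1)))).card
        = ∑ σ : Fin (s + 2), (Finset.univ.filter
            (fun i : Fin (s * (s + 1)) => (C i).symm σ = 0)).card := by
      have h0 := Finset.card_eq_sum_card_fiberwise
        (f := fun i : Fin (s * (s + 1)) => C i 0)
        (s := Finset.univ) (t := Finset.univ) (fun x _ => Finset.mem_univ _)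
      rw [h0]
      refine Finset.sum_congr rfl fun σ _ => ?_
      congr 1
      apply Finset.filter_congr
      intro i _
      constructor
      · intro h; rw [← h]; simp
      · intro h; rw [← h]; simp
    have hb : ∑ σ : Fin (s + 2), (Finset.univ.filter
          (fun i : Fin (s * (s + 1)) => (C i).symm σ = 0)).card
        ≤ (s + 2) * (s - 1) := by
      calc ∑ σ : Fin (s + 2), (Finset.univ.filter
            (fun i : Fin (s * (s + 1)) => (C i).symm σ = 0)).card
          ≤ ∑ _σ : Fin (s + 2), (s - 1) :=
            Finset.sum_le_sum fun σ _ => by have := hcon σ; omega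
        _ = (s + 2) * (s - 1) := by simp [Finset.sum_const, mul_comm]
    rw [Finset.card_univ, Fintype.card_fin] at hsum
    have hle : s * (s + 1) ≤ (s + 2) * (s - 1) := hsum ▸ hb
    obtain ⟨u, rfl⟩ : ∃ u, s = u + 2 := ⟨s - 2, by omega⟩
    have h2 : u + 2 - 1 = u + 1 := by omega
    rw [h2] at hle
    nlinarith [hle]
  obtain ⟨σstar, hσstar⟩ := hpig
  have h01 : (0 : Fin (s + 2)) ≠ 1 := by simp [Fin.ext_iff]
  -- new rows: row `j` has symbol `σstar.succAbove j` in position 0 and `σstar` in position 1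
  have hq : ∀ j : Fin (s + 1), ∃ p : Equiv.Perm (Fin (s + 2)),
      p (σstar.succAbove j) = 0 ∧ p σstar = 1 := by
    intro j
    set b := σstar.succAbove j with hbdef
    have hab : σstar ≠ b := (Fin.succAbove_ne _ _).symm
    refine ⟨(Equiv.swap (Equiv.swap b 0 σstar) 1) * Equiv.swap b 0, ?_, ?_⟩
    · simp only [Equiv.Perm.mul_apply, Equiv.swap_apply_left]
      apply Equiv.swap_apply_of_ne_of_ne
      · intro h0
        have h2 := congrArg (Equiv.swap b 0) h0
        rw [Equiv.swap_apply_right, Equiv.swap_apply_self] at h2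
        exact hab h2.symm
      · exact h01
    · simp only [Equiv.Perm.mul_apply]
      exact Equiv.swap_apply_left _ _
  choose R hR0 hR1 using hq
  have hsq : (s + 1) ^ 2 = s * (s + 1) + (s + 1) := by ring
  let D : Fin ((s + 1) ^ 2) → Equiv.Perm (Fin (s + 2)) := fun i =>
    if h : (i : ℕ) < s * (s + 1) then C ⟨(i : ℕ), h⟩
    else (R ⟨(i : ℕ) - s * (s + 1), by have := i.isLt; omega⟩).symm
  let e1 : Fin (s * (s + 1)) → Fin ((s + 1) ^ 2) :=
    fun i0 => ⟨(i0 : ℕ), by have := i0.isLt; omega⟩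
  let e2 : Fin (s + 1) → Fin ((s + 1) ^ 2) :=
    fun j => ⟨s * (s + 1) + (j : ℕ), by have := j.isLt; omega⟩
  have he1 : Function.Injective e1 := by
    intro a b h; apply Fin.ext; simpa [e1, Fin.ext_iff] using h
  have he2 : Function.Injective e2 := by
    intro a b h; apply Fin.ext; have := congrArg Fin.val h
    simpa [e2] using this
  have hD1 : ∀ a : Fin (s * (s + 1)), D (e1 a) = C a := by
    intro a
    show dite _ _ _ = _
    rw [dif_pos a.isLt]
  have hD2 : ∀ j : Fin (s + 1), D (e2 j) = (R j).symm := by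
    intro j
    show dite _ _ _ = _
    rw [dif_neg (by simp [e2])]
    congr 1
    exact congrArg R (Fin.ext (by simp [e2]))
  refine ⟨D, ?_⟩
  intro t' ht' σ S hσS hScard
  -- `t' ≤ s + 1`
  have hSsub : S ⊆ ({σ} : Finset (Fin (s + 2)))ᶜ := by
    intro τ hτ
    simp only [Finset.mem_compl, Finset.mem_singleton]
    rintro rfl; exact hσS hτ
  have ht'le : t' ≤ s + 1 := by
    have h1 := Finset.card_le_card hSsub
    rw [Finset.card_compl, Finset.card_singleton, Fintype.card_fin, hScard] at h1
    omega
  set oldF := Finset.univ.filter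
      (fun i : Fin (s * (s + 1)) => ∀ τ ∈ S, ((C i).symm σ : ℕ) < ((C i).symm τ : ℕ))
    with holdF
  set newF := Finset.univ.filter
      (fun j : Fin (s + 1) => ∀ τ ∈ S, ((R j σ : ℕ)) < ((R j τ : ℕ)))
    with hnewF
  have hdisj : Disjoint (oldF.image e1) (newF.image e2) := by
    rw [Finset.disjoint_left]
    rintro x hx1 hx2
    obtain ⟨a, _, rfl⟩ := Finset.mem_image.mp hx1
    obtain ⟨b, _, hb⟩ := Finset.mem_image.mp hx2
    have hval : s * (s + 1) + (b : ℕ) = (a : ℕ) := congrArg Fin.val hb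
    have := a.isLt
    omega
  have hmain : oldF.card + newF.card ≤ (Finset.univ.filter
      (fun i : Fin ((s + 1) ^ 2) =>
        ∀ τ ∈ S, ((D i).symm σ : ℕ) < ((D i).symm τ : ℕ))).card := by
    rw [← Finset.card_image_of_injective oldF he1,
      ← Finset.card_image_of_injective newF he2,
      ← Finset.card_union_of_disjoint hdisj]
    apply Finset.card_le_card
    intro x hx
    rcases Finset.mem_union.mp hx with hx | hx
    · obtain ⟨a, ha, rfl⟩ := Finset.mem_image.mp hx
      have haP := (Finset.mem_filter.mp ha).2
      refine Finset.mem_filter.mpr ⟨Finset.mem_univ _, ?_⟩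
      intro τ hτ
      rw [hD1 a]
      exact haP τ hτ
    · obtain ⟨b, hb, rfl⟩ := Finset.mem_image.mp hx
      have hbP := (Finset.mem_filter.mp hb).2
      refine Finset.mem_filter.mpr ⟨Finset.mem_univ _, ?_⟩
      intro τ hτ
      rw [hD2 b]
      simpa using hbP τ hτ
  refine le_trans ?_ hmain
  by_cases hσ : σ = σstar
  · subst hσ
    -- rows of `C` where `σ` is first all work
    have hold : s ≤ oldF.card := by
      refine le_trans hσstar (Finset.card_le_card ?_)
      intro i hi
      have h0 := (Finset.mem_filter.mp hi).2
      refine Finset.mem_filter.mpr ⟨Finset.mem_univ _, ?_⟩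
      intro τ hτ
      rw [h0]
      have hne : (C i).symm τ ≠ 0 := by
        intro h
        have h2 := (C i).symm.injective (h.trans h0.symm)
        exact hσS (h2 ▸ hτ)
      simpa [Fin.val_zero] using fin_val_pos_aux hne
    -- new rows whose first symbol avoids `S` all work
    have hcard1 : (Finset.univ.filter
        (fun j : Fin (s + 1) => σ.succAbove j ∈ S)).card = t' := by
      have himg : (Finset.univ.filter
          (fun j : Fin (s + 1) => σ.succAbove j ∈ S)).image σ.succAbove = S := by
        apply Finset.Subset.antisymm
        · intro τ hτ
          obtain ⟨j, hj, rfl⟩ := Finset.mem_image.mp hτ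
          exact (Finset.mem_filter.mp hj).2
        · intro τ hτ
          obtain ⟨j, hj⟩ := Fin.exists_succAbove_eq
            (show τ ≠ σ from fun h => hσS (h ▸ hτ))
          exact Finset.mem_image.mpr
            ⟨j, Finset.mem_filter.mpr ⟨Finset.mem_univ _, hj ▸ hτ⟩, hj⟩
      have hcim := Finset.card_image_of_injective
        (Finset.univ.filter (fun j : Fin (s + 1) => σ.succAbove j ∈ S))
        (Fin.succAbove_right_injective (p := σ))
      rw [himg, hScard] at hcim
      omega
    have hsplit := Finset.card_filter_add_card_filter_not
      (s := (Finset.univ : Finset (Fin (s + 1))))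
      (p := fun j => σ.succAbove j ∈ S)
    have hsub2 : (Finset.univ.filter
        (fun j : Fin (s + 1) => ¬ σ.succAbove j ∈ S)) ⊆ newF := by
      intro j hj
      have hjn := (Finset.mem_filter.mp hj).2
      refine Finset.mem_filter.mpr ⟨Finset.mem_univ _, ?_⟩
      intro τ hτ
      rw [hR1 j]
      have hτ0 : R j τ ≠ 0 := by
        intro h
        have h2 := (R j).injective (h.trans (hR0 j).symm)
        exact hjn (h2 ▸ hτ)
      have hτ1 : R j τ ≠ 1 := by
        intro h
        have h2 := (R j).injective (h.trans (hR1 j).symm)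
        exact hσS (h2 ▸ hτ)
      simpa [Fin.val_one] using fin_one_lt_aux hτ0 hτ1
    have hnew : (s + 1) - t' ≤ newF.card := by
      have h2 := Finset.card_le_card hsub2
      rw [Finset.card_univ, Fintype.card_fin] at hsplit
      omega
    omega
  · -- `σ ≠ σstar`: use the suitable-core property of `C` plus one new row
    have hold : 2 * s - t' ≤ oldF.card := hC t' (by omega) σ S hσS hScard
    have hnew : 1 ≤ newF.card := by
      obtain ⟨j, hj⟩ := Fin.exists_succAbove_eq hσ
      refine Finset.card_pos.mpr ⟨j, ?_⟩
      refine Finset.mem_filter.mpr ⟨Finset.mem_univ _, ?_⟩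
      intro τ hτ
      rw [show R j σ = 0 from hj ▸ hR0 j]
      have hτ0 : R j τ ≠ 0 := by
        intro h
        have h2 := (R j).injective (h.trans (hR0 j).symm)
        rw [hj] at h2
        exact hσS (h2 ▸ hτ)
      simpa [Fin.val_zero] using fin_val_pos_aux hτ0
    omega
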